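/- arXiv:1805.05641 — 4 statements merged into one kernel-verified Lean document; each statement's English description precedes it below -/
import Mathlib

section
/- Let A be a real k×n matrix (1 ≤ k ≤ n), let κ_1, …, κ_n and c_1, …, c_n be arbitrary real numbers, and set f_i(x) = Σ_{j=1}^n A_{ij} e^{κ_j x + c_j} for i = 1, …, k. Then for every x ∈ ℝ the Wronskian determinant satisfies det( f_i^{(l−1)}(x) )_{i,l=1}^{k} = Σ_I Δ_I(A) · Π_{i_1<i_2, i_1,i_2∈I} (κ_{i_2} − κ_{i_1}) · e^{Σ_{i∈I} (κ_i x + c_i)}, where the sum is over all k-element subsets I = {i_1 < … < i_k} of {1,…,n} and Δ_I(A) is the k×k minor of A on the columns indexed by I. -/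
open scoped BigOperators
open Finset Equiv Matrix




/-- The `k × k` maximal minor of a real `k × n` matrix `A` on the set of columns `I`
(defined to be `0` when `I` does not have exactly `k` elements). -/
noncomputable def maxMinor {k n : ℕ} (A : Matrix (Fin k) (Fin n) ℝ)
    (I : Finset (Fin n)) : ℝ :=
  if h : I.card = k then
    (A.submatrix id fun j => ((I.orderIsoOfFin h) j : Fin n)).det
  else 0

/-- The Vandermonde-type product `Π_{i₁ < i₂, i₁,i₂ ∈ I} (κ i₂ - κ i₁)`. -/
noncomputable def vandProd {n : ℕ} (κ : Fin n → ℝ) (I : Finset (Fin n)) : ℝ :=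
  ∏ p ∈ (I ×ˢ I).filter fun p => p.1 < p.2, (κ p.2 - κ p.1)



lemma hasDerivAt_exp_aff (a b x : ℝ) :
    HasDerivAt (fun x => Real.exp (a * x + b)) (a * Real.exp (a * x + b)) x := by
  have h : HasDerivAt (fun x : ℝ => a * x + b) a x := by
    simpa using ((hasDerivAt_id x).const_mul a).add_const b
  simpa [mul_comm] using h.exp

lemma iteratedDeriv_expsum {n : ℕ} (w κ c : Fin n → ℝ) (m : ℕ) (x : ℝ) :
    iteratedDeriv m (fun x => ∑ j, w j * Real.exp (κ j * x + c j)) x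
      = ∑ j, w j * κ j ^ m * Real.exp (κ j * x + c j) := by
  induction m generalizing x with
  | zero => simp [mul_assoc]
  | succ m ih =>
    rw [iteratedDeriv_succ]
    have h1 : iteratedDeriv m (fun x => ∑ j, w j * Real.exp (κ j * x + c j))
        = fun x => ∑ j, w j * κ j ^ m * Real.exp (κ j * x + c j) := funext ih
    rw [h1]
    have h : HasDerivAt (fun x => ∑ j, w j * κ j ^ m * Real.exp (κ j * x + c j))
        (∑ j, w j * κ j ^ (m + 1) * Real.exp (κ j * x + c j)) x := by
      apply HasDerivAt.fun_sum
      intro j _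
      have := (hasDerivAt_exp_aff (κ j) (c j) x).const_mul (w j * κ j ^ m)
      convert this using 1
      · rfl
      ring
    exact h.deriv


noncomputable def rowMinor {k n : ℕ} (B : Matrix (Fin n) (Fin k) ℝ)
    (I : Finset (Fin n)) : ℝ :=
  if h : I.card = k then
    (B.submatrix (fun j => ((I.orderIsoOfFin h) j : Fin n)) id).det
  else 0

lemma detAB (k n : ℕ) (A : Matrix (Fin k) (Fin n) ℝ) (B : Matrix (Fin n) (Fin k) ℝ) :
    (A * B).det = ∑ p : Fin k → Fin n, (A.submatrix id p).det * ∏ i, B (p i) i := by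
  have h1 : (A * B).det
      = ∑ σ : Perm (Fin k), ∑ p : Fin k → Fin n,
          (((Perm.sign σ : ℤ) : ℝ) * ∏ i, A (σ i) (p i)) * ∏ i, B (p i) i := by
    rw [det_apply']
    refine Finset.sum_congr rfl fun σ _ => ?_
    simp only [mul_apply, Finset.prod_univ_sum, Fintype.piFinset_univ, Finset.mul_sum]
    refine Finset.sum_congr rfl fun p _ => ?_
    rw [Finset.prod_mul_distrib]
    ring
  rw [h1, Finset.sum_comm]
  refine Finset.sum_congr rfl fun p _ => ?_
  rw [det_apply', Finset.sum_mul]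
  refine Finset.sum_congr rfl fun σ _ => ?_
  simp [Matrix.submatrix, mul_assoc]

lemma cauchyBinet (k n : ℕ) (A : Matrix (Fin k) (Fin n) ℝ) (B : Matrix (Fin n) (Fin k) ℝ) :
    (A * B).det = ∑ I ∈ Finset.powersetCard k (Finset.univ : Finset (Fin n)),
      maxMinor A I * rowMinor B I := by
  rw [detAB]
  -- restrict to injective p
  have h2 : ∑ p : Fin k → Fin n, (A.submatrix id p).det * ∏ i, B (p i) i
      = ∑ p ∈ Finset.univ.filter (fun p : Fin k → Fin n => Function.Injective p),
          (A.submatrix id p).det * ∏ i, B (p i) i := by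
    refine (Finset.sum_subset (Finset.filter_subset _ _) fun p _ hp => ?_).symm
    simp only [Finset.mem_filter, Finset.mem_univ, true_and] at hp
    rw [Function.not_injective_iff] at hp
    obtain ⟨a, b, hab, hne⟩ := hp
    have : (A.submatrix id p).det = 0 :=
      Matrix.det_zero_of_column_eq hne fun r => by simp [hab]
    rw [this, zero_mul]
  rw [h2]
  -- fiberwise over the image
  rw [← Finset.sum_fiberwise_of_maps_to (t := Finset.powersetCard k (Finset.univ : Finset (Fin n))) (g := fun p : Fin k → Fin n => Finset.univ.image p)
      (fun p hp => by
        simp only [Finset.mem_filter, Finset.mem_univ, true_and] at hp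
        simp [Finset.mem_powersetCard, Finset.card_image_of_injective _ hp])]
  refine Finset.sum_congr rfl fun I hI => ?_
  have hIc : I.card = k := (Finset.mem_powersetCard.mp hI).2
  set σ : Fin k → Fin n := fun l => ((I.orderIsoOfFin hIc) l : Fin n) with hσ
  have hσI : ∀ l, σ l ∈ I := fun l => ((I.orderIsoOfFin hIc) l).2
  have hσinj : Function.Injective σ :=
    fun a b hab => (I.orderIsoOfFin hIc).injective (Subtype.ext hab)
  have key : ∑ p ∈ (Finset.univ.filter (fun p : Fin k → Fin n => Function.Injective p)).filter
        (fun p => Finset.univ.image p = I),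
        (A.submatrix id p).det * ∏ i, B (p i) i
      = ∑ τ : Perm (Fin k), (A.submatrix id (σ ∘ τ)).det * ∏ i, B (σ (τ i)) i := by
    refine Finset.sum_bij' (i := fun p hp => ?_) (j := fun τ _ => σ ∘ τ) ?_ ?_ ?_ ?_ ?_
    · -- build the permutation from p
      simp only [Finset.mem_filter, Finset.mem_univ, true_and] at hp
      have hmem : ∀ l, p l ∈ I := fun l => hp.2 ▸ Finset.mem_image_of_mem p (Finset.mem_univ l)
      exact Equiv.ofBijective (fun l => (I.orderIsoOfFin hIc).symm ⟨p l, hmem l⟩)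
        ((Finite.injective_iff_bijective).mp fun a b hab => hp.1 (by
          have := congrArg (fun z => ((I.orderIsoOfFin hIc) z : Fin n)) hab
          simpa using this))
    · intro p hp; exact Finset.mem_univ _
    · intro τ _
      simp only [Finset.mem_filter, Finset.mem_univ, true_and]
      constructor
      · exact hσinj.comp τ.injective
      · apply Finset.eq_of_subset_of_card_le
        · intro j hj
          simp only [Finset.mem_image] at hj
          obtain ⟨l, _, rfl⟩ := hj
          exact hσI _
        · rw [hIc, Finset.card_image_of_injective _ (hσinj.comp τ.injective)]
          exact le_of_eq (Finset.card_fin k).symm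
    · intro p hp
      funext l
      show ((I.orderIsoOfFin hIc) ((I.orderIsoOfFin hIc).symm ⟨p l, _⟩) : Fin n) = p l
      rw [OrderIso.apply_symm_apply]
    · intro τ _
      ext l
      simp only [Equiv.ofBijective_apply, Function.comp_apply, hσ]
      have : (⟨↑((I.orderIsoOfFin hIc) (τ l)), _⟩ : {x // x ∈ I}) = (I.orderIsoOfFin hIc) (τ l) := rfl
      rw [this, OrderIso.symm_apply_apply]
    · intro p hp
      simp only [Finset.mem_filter, Finset.mem_univ, true_and] at hp
      have hmem : ∀ l, p l ∈ I := fun l => hp.2 ▸ Finset.mem_image_of_mem p (Finset.mem_univ l)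
      simp only [Equiv.ofBijective_apply]
      congr 1
      · congr 1
        funext l m
        simp only [Function.comp_apply, hσ, Matrix.submatrix_apply, id]
        congr 1
        exact (congrArg Subtype.val ((I.orderIsoOfFin hIc).apply_symm_apply ⟨p m, hmem m⟩)).symm
      · refine Finset.prod_congr rfl fun i _ => ?_
        congr 1
        simp only [hσ]
        exact (congrArg Subtype.val ((I.orderIsoOfFin hIc).apply_symm_apply ⟨p i, hmem i⟩)).symm
  rw [key]
  -- evaluate the permutation sum
  have step : ∀ τ : Perm (Fin k),
      (A.submatrix id (σ ∘ τ)).det = ((Perm.sign τ : ℤ) : ℝ) * (A.submatrix id σ).det := by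
    intro τ
    have : A.submatrix id (σ ∘ τ) = (A.submatrix id σ).submatrix id τ := rfl
    rw [this, Matrix.det_permute']
  calc ∑ τ : Perm (Fin k), (A.submatrix id (σ ∘ τ)).det * ∏ i, B (σ (τ i)) i
      = (A.submatrix id σ).det * ∑ τ : Perm (Fin k),
          ((Perm.sign τ : ℤ) : ℝ) * ∏ i, (B.submatrix σ id) (τ i) i := by
        rw [Finset.mul_sum]
        refine Finset.sum_congr rfl fun τ _ => ?_
        rw [step τ]
        simp [Matrix.submatrix]
        ring
    _ = maxMinor A I * rowMinor B I := by
        rw [← det_apply', maxMinor, rowMinor, dif_pos hIc, dif_pos hIc]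


lemma rowMinor_E (k n : ℕ) (κ c : Fin n → ℝ) (x : ℝ) (I : Finset (Fin n))
    (hIc : I.card = k) :
    rowMinor (Matrix.of fun j (m : Fin k) => κ j ^ (m : ℕ) * Real.exp (κ j * x + c j)) I
      = vandProd κ I * Real.exp (∑ i ∈ I, (κ i * x + c i)) := by
  rw [rowMinor, dif_pos hIc]
  set σ : Fin k → Fin n := fun l => ((I.orderIsoOfFin hIc) l : Fin n) with hσ
  have hmono : ∀ a b : Fin k, a < b ↔ σ a < σ b := by
    intro a b
    rw [hσ]
    exact ((Subtype.coe_lt_coe).trans ((I.orderIsoOfFin hIc).lt_iff_lt)).symm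
  have hmem : ∀ l, σ l ∈ I := fun l => ((I.orderIsoOfFin hIc) l).2
  have hMeq : (Matrix.of fun j (m : Fin k) => κ j ^ (m : ℕ) * Real.exp (κ j * x + c j)).submatrix
        σ id
      = Matrix.of fun l m => Real.exp (κ (σ l) * x + c (σ l)) *
          (Matrix.vandermonde fun l => κ (σ l)) l m := by
    ext l m
    simp [Matrix.vandermonde, mul_comm]
  rw [hMeq, Matrix.det_mul_column, Matrix.det_vandermonde]
  have hprodexp : (∏ l : Fin k, Real.exp (κ (σ l) * x + c (σ l)))
      = Real.exp (∑ i ∈ I, (κ i * x + c i)) := by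
    rw [← Real.exp_sum]
    congr 1
    rw [← Finset.sum_coe_sort I (fun i => κ i * x + c i)]
    exact Fintype.sum_equiv (I.orderIsoOfFin hIc).toEquiv
      (fun l => κ (σ l) * x + c (σ l)) (fun i => κ ↑i * x + c ↑i) (fun l => rfl)
  have hvand : (∏ i : Fin k, ∏ j ∈ Finset.Ioi i, (κ (σ j) - κ (σ i))) = vandProd κ I := by
    rw [vandProd, Finset.prod_sigma']
    refine Finset.prod_bij' (i := fun q _ => (σ q.1, σ q.2))
      (j := fun p hp => ?_) ?_ ?_ ?_ ?_ ?_
    · -- backward map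
      simp only [Finset.mem_filter, Finset.mem_product] at hp
      exact ⟨(I.orderIsoOfFin hIc).symm ⟨p.1, hp.1.1⟩, (I.orderIsoOfFin hIc).symm ⟨p.2, hp.1.2⟩⟩
    · intro q hq
      simp only [Finset.mem_sigma, Finset.mem_univ, Finset.mem_Ioi] at hq
      simp only [Finset.mem_filter, Finset.mem_product]
      exact ⟨⟨hmem _, hmem _⟩, (hmono _ _).mp hq.2⟩
    · intro p hp
      simp only [Finset.mem_filter, Finset.mem_product] at hp
      simp only [Finset.mem_sigma, Finset.mem_univ, Finset.mem_Ioi, true_and]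
      rw [hmono]
      show σ ((I.orderIsoOfFin hIc).symm ⟨p.1, _⟩) < σ ((I.orderIsoOfFin hIc).symm ⟨p.2, _⟩)
      rw [hσ]
      simp only [OrderIso.apply_symm_apply]
      exact hp.2
    · rintro ⟨a, b⟩ hq
      have ha : (I.orderIsoOfFin hIc).symm ⟨σ a, hmem a⟩ = a :=
        (I.orderIsoOfFin hIc).symm_apply_apply a
      have hb : (I.orderIsoOfFin hIc).symm ⟨σ b, hmem b⟩ = b :=
        (I.orderIsoOfFin hIc).symm_apply_apply b
      exact Sigma.ext ha (heq_of_eq hb)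
    · intro p hp
      simp only [Finset.mem_filter, Finset.mem_product] at hp
      have h1 : σ ((I.orderIsoOfFin hIc).symm ⟨p.1, hp.1.1⟩) = p.1 :=
        congrArg Subtype.val ((I.orderIsoOfFin hIc).apply_symm_apply ⟨p.1, hp.1.1⟩)
      have h2 : σ ((I.orderIsoOfFin hIc).symm ⟨p.2, hp.1.2⟩) = p.2 :=
        congrArg Subtype.val ((I.orderIsoOfFin hIc).apply_symm_apply ⟨p.2, hp.1.2⟩)
      simp [h1, h2]
    · intro q hq
      rfl
  rw [hprodexp, hvand, mul_comm]

/-- the Wronskian of `f_i(x) = Σ_j A_{ij} e^{κ_j x + c_j}` equals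
`Σ_I Δ_I(A) · Π_{i₁<i₂∈I}(κ_{i₂}-κ_{i₁}) · e^{Σ_{i∈I}(κ_i x + c_i)}`,
the sum running over all `k`-element subsets `I` of the columns. -/
theorem wronskian_of_exponential_sums_eq_sum_minors
    (k n : ℕ) (hk : 1 ≤ k) (hkn : k ≤ n)
    (A : Matrix (Fin k) (Fin n) ℝ) (κ c : Fin n → ℝ)
    (f : Fin k → ℝ → ℝ)
    (hf : ∀ i x, f i x = ∑ j, A i j * Real.exp (κ j * x + c j))
    (x : ℝ) :
    Matrix.det (Matrix.of fun i l : Fin k => iteratedDeriv (l : ℕ) (f i) x) =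
      ∑ I ∈ Finset.powersetCard k (Finset.univ : Finset (Fin n)),
        maxMinor A I * vandProd κ I * Real.exp (∑ i ∈ I, (κ i * x + c i)) := by
  classical
  set E : Matrix (Fin n) (Fin k) ℝ :=
    Matrix.of fun j (m : Fin k) => κ j ^ (m : ℕ) * Real.exp (κ j * x + c j) with hE
  have hW : (Matrix.of fun i l : Fin k => iteratedDeriv (l : ℕ) (f i) x) = A * E := by
    ext i l
    have hfi : f i = fun x => ∑ j, A i j * Real.exp (κ j * x + c j) := funext (hf i)
    rw [Matrix.of_apply, hfi, iteratedDeriv_expsum, Matrix.mul_apply]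
    refine Finset.sum_congr rfl fun j _ => ?_
    simp [hE, mul_assoc]
  rw [hW, cauchyBinet]
  refine Finset.sum_congr rfl fun I hI => ?_
  have hIc : I.card = k := (Finset.mem_powersetCard.mp hI).2
  rw [hE, rowMinor_E k n κ c x I hIc, mul_assoc]
end

section
/- Let 1 ≤ k < n, κ_1 < … < κ_n real, c_1, …, c_n real, and let A be a totally nonnegative real k×n matrix of rank k. With f_i(x) = Σ_{j=1}^n A_{ij} e^{κ_j x + c_j}, for every x ∈ ℝ there exist unique real numbers w_1(x), …, w_k(x) such that f_i^{(k)}(x) = Σ_{s=1}^k w_s(x) f_i^{(k−s)}(x) for all i = 1, …, k. -/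
open scoped BigOperators Matrix

/-! ### Auxiliary lemmas -/

private lemma iterDeriv_expSum {n : ℕ} (κ c : Fin n → ℝ) :
    ∀ (m : ℕ) (a : Fin n → ℝ) (x : ℝ),
      iteratedDeriv m (fun y => ∑ j, a j * Real.exp (κ j * y + c j)) x
        = ∑ j, a j * κ j ^ m * Real.exp (κ j * x + c j) := by
  intro m
  induction m with
  | zero => intro a x; simp
  | succ m ih =>
    intro a x
    rw [iteratedDeriv_succ']
    have hderiv : (deriv fun y => ∑ j, a j * Real.exp (κ j * y + c j))
        = fun y => ∑ j, (a j * κ j) * Real.exp (κ j * y + c j) := by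
      funext y
      have H : HasDerivAt (fun y => ∑ j, a j * Real.exp (κ j * y + c j))
          (∑ j, (a j * κ j) * Real.exp (κ j * y + c j)) y := by
        apply HasDerivAt.fun_sum
        intro j _
        have h1 : HasDerivAt (fun y : ℝ => κ j * y + c j) (κ j) y := by
          simpa using ((hasDerivAt_id y).const_mul (κ j)).add_const (c j)
        have h3 := (h1.exp).const_mul (a j)
        convert h3 using 1
        · rfl
        ring
      exact H.deriv
    rw [hderiv, ih (fun j => a j * κ j) x]
    apply Finset.sum_congr rfl
    intro j _
    ring

private def colMap {k n : ℕ} (I : {I : Finset (Fin n) // I.card = k}) : Fin k → Fin n :=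
  fun s => ((I.1.orderIsoOfFin I.2) s : Fin n)

private lemma colMap_injective {k n : ℕ} (I : {I : Finset (Fin n) // I.card = k}) :
    Function.Injective (colMap I) := by
  intro a b hab
  have := (I.1.orderIsoOfFin I.2).injective (Subtype.ext hab)
  exact this

private lemma colMap_strictMono {k n : ℕ} (I : {I : Finset (Fin n) // I.card = k}) :
    StrictMono (colMap I) := by
  intro a b hab
  exact (I.1.orderIsoOfFin I.2).strictMono hab

private lemma colMap_image {k n : ℕ} (I : {I : Finset (Fin n) // I.card = k})
    (σ : Equiv.Perm (Fin k)) :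
    Finset.image (fun i => colMap I (σ i)) Finset.univ = I.1 := by
  apply Finset.eq_of_subset_of_card_le
  · intro a ha
    obtain ⟨i, _, rfl⟩ := Finset.mem_image.mp ha
    exact ((I.1.orderIsoOfFin I.2) (σ i)).2
  · rw [Finset.card_image_of_injective Finset.univ
        (show Function.Injective (fun i => colMap I (σ i)) from
          fun a b hab => σ.injective (colMap_injective I hab))]
    simp [I.2]

/-- The bijection between pairs (k-subset, permutation) and injective maps `Fin k → Fin n`. -/
private lemma phi_bijective {k n : ℕ} :
    Function.Bijective (fun p : {I : Finset (Fin n) // I.card = k} × Equiv.Perm (Fin k) =>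
      (⟨fun i => colMap p.1 (p.2 i),
        (colMap_injective p.1).comp p.2.injective⟩ :
          {r : Fin k → Fin n // Function.Injective r})) := by
  constructor
  · rintro ⟨⟨I, hI⟩, σ⟩ ⟨⟨J, hJ⟩, τ⟩ h
    have hfun : (fun i => colMap ⟨I, hI⟩ (σ i)) = fun i => colMap ⟨J, hJ⟩ (τ i) :=
      congrArg Subtype.val h
    have hIJ : I = J := by
      have := colMap_image ⟨I, hI⟩ σ
      rw [hfun, colMap_image ⟨J, hJ⟩ τ] at this
      exact this.symm
    subst hIJ
    have hστ : σ = τ := by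
      apply Equiv.ext
      intro i
      exact colMap_injective ⟨I, hI⟩ (congrFun hfun i)
    simp [hστ]
  · rintro ⟨r, hr⟩
    have hI : (Finset.image r Finset.univ).card = k := by
      rw [Finset.card_image_of_injective _ hr, Finset.card_univ, Fintype.card_fin]
    set I : {I : Finset (Fin n) // I.card = k} := ⟨Finset.image r Finset.univ, hI⟩ with hIdef
    have hmem : ∀ i, r i ∈ I.1 := fun i => Finset.mem_image_of_mem r (Finset.mem_univ i)
    set σf : Fin k → Fin k := fun i => (I.1.orderIsoOfFin I.2).symm ⟨r i, hmem i⟩ with hσf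
    have hσinj : Function.Injective σf := by
      intro a b hab
      have h2 := congrArg (I.1.orderIsoOfFin I.2) hab
      rw [OrderIso.apply_symm_apply, OrderIso.apply_symm_apply] at h2
      exact hr (congrArg Subtype.val h2)
    obtain hσbij := Finite.injective_iff_bijective.mp hσinj
    refine ⟨⟨I, Equiv.ofBijective σf hσbij⟩, ?_⟩
    apply Subtype.ext
    funext i
    show colMap I (σf i) = r i
    simp only [colMap, hσf, OrderIso.apply_symm_apply]

private lemma det_mul_expand {k n : ℕ} (B : Matrix (Fin k) (Fin n) ℝ)
    (C : Matrix (Fin n) (Fin k) ℝ) :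
    (B * C).det = ∑ r : Fin k → Fin n,
      (∏ i, B i (r i)) * (C.submatrix r id).det := by
  have emat : (fun i => (B * C) i) = fun i : Fin k => ∑ j, B i j • C j := by
    funext i s
    simp [Matrix.mul_apply, Finset.sum_apply]
  have h1 : (B * C).det
      = Matrix.detRowAlternating (fun i : Fin k => ∑ j, B i j • C j) := by
    rw [Matrix.det]
    exact congrArg _ emat
  rw [h1]
  rw [show (Matrix.detRowAlternating (fun i : Fin k => ∑ j, B i j • C j))
      = (Matrix.detRowAlternating (R := ℝ) (n := Fin k)).toMultilinearMap
          (fun i : Fin k => ∑ j, B i j • C j) from rfl]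
  rw [MultilinearMap.map_sum]
  apply Finset.sum_congr rfl
  intro r _
  have h2 : ((Matrix.detRowAlternating (R := ℝ) (n := Fin k)).toMultilinearMap
        (fun i : Fin k => B i (r i) • C (r i)))
      = (∏ i, B i (r i)) • (Matrix.detRowAlternating (R := ℝ) (n := Fin k)).toMultilinearMap
        (fun i : Fin k => C (r i)) :=
    MultilinearMap.map_smul_univ _ _ _
  rw [h2, smul_eq_mul]
  congr 1

/-- Cauchy–Binet formula over `ℝ`. -/
private lemma cauchyBinet_s2 {k n : ℕ} (B : Matrix (Fin k) (Fin n) ℝ)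
    (C : Matrix (Fin n) (Fin k) ℝ) :
    (B * C).det = ∑ I : {I : Finset (Fin n) // I.card = k},
      (B.submatrix id (colMap I)).det * (C.submatrix (colMap I) id).det := by
  classical
  rw [det_mul_expand]
  have hz : ∀ r : Fin k → Fin n, ¬ Function.Injective r →
      (∏ i, B i (r i)) * (C.submatrix r id).det = 0 := by
    intro r hr
    have hv : ¬ Function.Injective (fun i => C (r i)) := by
      intro h
      apply hr
      intro a b hab
      exact h (show C (r a) = C (r b) from congrArg C hab)
    have : (C.submatrix r id).det = 0 :=
      (Matrix.detRowAlternating (R := ℝ) (n := Fin k)).map_eq_zero_of_not_injective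
        (fun i => C (r i)) hv
    rw [this, mul_zero]
  have h4 : (∑ r : Fin k → Fin n, (∏ i, B i (r i)) * (C.submatrix r id).det)
      = ∑ r ∈ Finset.univ.filter (fun r : Fin k → Fin n => Function.Injective r),
          (∏ i, B i (r i)) * (C.submatrix r id).det := by
    refine (Finset.sum_filter_of_ne ?_).symm
    intro r _ hne
    by_contra h
    exact hne (hz r h)
  rw [h4]
  have h5 : (∑ r ∈ Finset.univ.filter (fun r : Fin k → Fin n => Function.Injective r),
          (∏ i, B i (r i)) * (C.submatrix r id).det)
      = ∑ r : {r : Fin k → Fin n // Function.Injective r},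
          (∏ i, B i (r.1 i)) * (C.submatrix r.1 id).det := by
    refine (Finset.sum_subtype _ ?_ _)
    intro r
    simp
  rw [h5]
  have h6 := Fintype.sum_bijective _ (phi_bijective (k := k) (n := n))
    (fun p => (∏ i, B i (colMap p.1 (p.2 i)))
      * (C.submatrix (fun i => colMap p.1 (p.2 i)) id).det)
    (fun r => (∏ i, B i (r.1 i)) * (C.submatrix r.1 id).det)
    (fun p => rfl)
  rw [← h6, Fintype.sum_prod_type]
  apply Finset.sum_congr rfl
  intro I _
  have hsub : ∀ σ : Equiv.Perm (Fin k),
      (C.submatrix (fun i => colMap I (σ i)) id)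
        = ((C.submatrix (colMap I) id).submatrix σ id) := fun σ => rfl
  rw [show (B.submatrix id (colMap I)).det = (B.submatrix id (colMap I))ᵀ.det from
    (Matrix.det_transpose _).symm, Matrix.det_apply', Finset.sum_mul]
  apply Finset.sum_congr rfl
  intro σ _
  rw [hsub σ, Matrix.det_permute]
  have hp : (∏ i, (B.submatrix id (colMap I))ᵀ (σ i) i) = ∏ i, B i (colMap I (σ i)) :=
    Finset.prod_congr rfl (fun i _ => rfl)
  rw [hp]
  ring

private lemma exists_good_cols {k n : ℕ} (A : Matrix (Fin k) (Fin n) ℝ) (hrank : A.rank = k) :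
    ∃ g : Fin k → Fin n, Function.Injective g ∧ (A.submatrix id g).det ≠ 0 := by
  classical
  have hfin : Module.finrank ℝ (Fin k → ℝ) = k := Module.finrank_fin_fun ℝ
  have hspan : Submodule.span ℝ (Set.range Aᵀ) = ⊤ := by
    apply Submodule.eq_top_of_finrank_eq
    rw [hfin]
    exact (Matrix.rank_eq_finrank_span_cols A).symm.trans hrank
  obtain ⟨b, hbsub, hbspan, hbli⟩ := exists_linearIndependent ℝ (Set.range Aᵀ)
  rw [hspan] at hbspan
  have : Finite b := hbli.finite
  have : Fintype b := Fintype.ofFinite _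
  have hbas : Module.Basis b ℝ (Fin k → ℝ) := Module.Basis.mk hbli (by
    rw [← hbspan]
    apply le_of_eq
    congr 1
    exact (Subtype.range_coe_subtype).symm ▸ rfl)
  have hcard : Fintype.card b = k := by
    rw [← Module.finrank_eq_card_basis hbas, hfin]
  let e : Fin k ≃ b := (Fintype.equivFinOfCardEq hcard).symm
  have hpick : ∀ s : Fin k, ∃ j : Fin n, Aᵀ j = (e s : Fin k → ℝ) := fun s => hbsub (e s).2
  choose g hgspec using hpick
  refine ⟨g, ?_, ?_⟩
  · intro a b' hab
    have : (e a : Fin k → ℝ) = (e b' : Fin k → ℝ) := by rw [← hgspec a, ← hgspec b', hab]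
    exact e.injective (Subtype.ext this)
  · have hcols : (fun s => (A.submatrix id g)ᵀ s) = fun s => ((e s : Fin k → ℝ)) := by
      funext s
      exact hgspec s
    have hli2 : LinearIndependent ℝ (fun s => (A.submatrix id g)ᵀ s) := by
      rw [hcols]
      exact hbli.comp e e.injective
    have hunit : IsUnit (A.submatrix id g) :=
      Matrix.linearIndependent_cols_iff_isUnit.mp hli2
    have := (Matrix.isUnit_iff_isUnit_det _).mp hunit
    exact this.ne_zero

/-- for totally nonnegative soliton data of full rank `k`, at every
`x ∈ ℝ` there exist unique Darboux coefficients `w_1(x), …, w_k(x)` (here indexed by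
`s : Fin k` corresponding to `w_{s+1}`) such that
`f_i^{(k)}(x) = Σ_{s=1}^k w_s(x) f_i^{(k-s)}(x)` for all `i`. -/
theorem darboux_coefficients_existUnique
    (k n : ℕ) (hk : 1 ≤ k) (hkn : k < n)
    (κ c : Fin n → ℝ) (hκ : StrictMono κ)
    (A : Matrix (Fin k) (Fin n) ℝ) (hrank : A.rank = k)
    (hTNN : ∀ I : Finset (Fin n), I.card = k → 0 ≤ maxMinor A I)
    (f : Fin k → ℝ → ℝ)
    (hf : ∀ i x, f i x = ∑ j, A i j * Real.exp (κ j * x + c j))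
    (x : ℝ) :
    ∃! w : Fin k → ℝ, ∀ i : Fin k,
      iteratedDeriv k (f i) x =
        ∑ s : Fin k, w s * iteratedDeriv (k - 1 - (s : ℕ)) (f i) x := by
  classical
  have hder : ∀ (m : ℕ) (i : Fin k), iteratedDeriv m (f i) x
      = ∑ j, A i j * κ j ^ m * Real.exp (κ j * x + c j) := by
    intro m i
    have : f i = fun y => ∑ j, A i j * Real.exp (κ j * y + c j) := funext (hf i)
    rw [this]
    exact iterDeriv_expSum κ c m (fun j => A i j) x
  set g : Fin n → ℝ := fun j => Real.exp (κ j * x + c j) with hg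
  set B : Matrix (Fin k) (Fin n) ℝ := Matrix.of (fun i j => A i j * g j) with hB
  set C : Matrix (Fin n) (Fin k) ℝ := Matrix.of (fun j (s : Fin k) => κ j ^ (s : ℕ)) with hC
  have hBdet : ∀ I : {I : Finset (Fin n) // I.card = k},
      (B.submatrix id (colMap I)).det = maxMinor A I.1 * ∏ s, g (colMap I s) := by
    intro I
    have hfac : B.submatrix id (colMap I)
        = (A.submatrix id (colMap I)) * Matrix.diagonal (fun s => g (colMap I s)) := by
      ext i s
      rw [Matrix.mul_diagonal]
      rfl
    rw [hfac, Matrix.det_mul, Matrix.det_diagonal, maxMinor, dif_pos I.2]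
    rfl
  have hCpos : ∀ I : {I : Finset (Fin n) // I.card = k},
      0 < (C.submatrix (colMap I) id).det := by
    intro I
    have h2 : (C.submatrix (colMap I) id)
        = Matrix.vandermonde (fun s : Fin k => κ (colMap I s)) := by
      ext s t; rfl
    rw [h2, Matrix.det_vandermonde]
    apply Finset.prod_pos
    intro i _
    apply Finset.prod_pos
    intro j hj
    have hij : i < j := Finset.mem_Ioi.mp hj
    have hsm : StrictMono (fun s : Fin k => κ (colMap I s)) :=
      fun a b hab => hκ (colMap_strictMono I hab)
    exact sub_pos.mpr (hsm hij)
  have hpos : 0 < (B * C).det := by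
    rw [cauchyBinet_s2]
    apply Finset.sum_pos'
    · intro I _
      apply mul_nonneg _ (hCpos I).le
      rw [hBdet I]
      apply mul_nonneg (hTNN I.1 I.2)
      exact Finset.prod_nonneg fun s _ => (Real.exp_pos _).le
    · obtain ⟨g', hginj, hgdet⟩ := exists_good_cols A hrank
      obtain ⟨p, hp⟩ := (phi_bijective (k := k) (n := n)).2 ⟨g', hginj⟩
      have hpfun : (fun i => colMap p.1 (p.2 i)) = g' := congrArg Subtype.val hp
      refine ⟨p.1, Finset.mem_univ _, ?_⟩
      have hA : (A.submatrix id g')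
          = (A.submatrix id (colMap p.1)).submatrix id ⇑p.2 := by
        rw [← hpfun]
        rfl
      have hdetI : (A.submatrix id (colMap p.1)).det ≠ 0 := by
        intro h0
        apply hgdet
        rw [hA, Matrix.det_permute', h0, mul_zero]
      have hmax : 0 < maxMinor A p.1.1 := by
        have hge := hTNN p.1.1 p.1.2
        have heq : maxMinor A p.1.1 = (A.submatrix id (colMap p.1)).det := by
          rw [maxMinor, dif_pos p.1.2]
          rfl
        rcases lt_or_eq_of_le hge with h | h
        · exact h
        · exact absurd (heq ▸ h.symm) hdetI
      apply mul_pos _ (hCpos p.1)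
      rw [hBdet p.1]
      exact mul_pos hmax (Finset.prod_pos fun s _ => Real.exp_pos _)
  set M : Matrix (Fin k) (Fin k) ℝ :=
    Matrix.of (fun i (s : Fin k) => iteratedDeriv (k - 1 - (s : ℕ)) (f i) x) with hM
  have hMrev : M = (B * C).submatrix id ⇑(Fin.revPerm (n := k)) := by
    ext i s
    have hrev : ((Fin.rev s : Fin k) : ℕ) = k - 1 - (s : ℕ) := by
      rw [Fin.val_rev]
      omega
    show iteratedDeriv (k - 1 - (s : ℕ)) (f i) x = (B * C) i (Fin.rev s)
    rw [hder (k - 1 - (s : ℕ)) i, Matrix.mul_apply]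
    apply Finset.sum_congr rfl
    intro j _
    show A i j * κ j ^ (k - 1 - (s : ℕ)) * g j = (A i j * g j) * κ j ^ ((Fin.rev s : Fin k) : ℕ)
    rw [hrev]
    ring
  have hMdet : M.det ≠ 0 := by
    rw [hMrev, Matrix.det_permute']
    intro h0
    rcases mul_eq_zero.mp h0 with h | h
    · exact Int.cast_ne_zero.mpr (Units.ne_zero _) h
    · exact hpos.ne' h
  have hMunit : IsUnit M.det := isUnit_iff_ne_zero.mpr hMdet
  set bb : Fin k → ℝ := fun i => iteratedDeriv k (f i) x with hbb
  have key : ∀ w : Fin k → ℝ,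
      (∀ i : Fin k, iteratedDeriv k (f i) x
          = ∑ s : Fin k, w s * iteratedDeriv (k - 1 - (s : ℕ)) (f i) x)
        ↔ M.mulVec w = bb := by
    intro w
    constructor
    · intro h
      funext i
      show ∑ s, M i s * w s = iteratedDeriv k (f i) x
      rw [h i]
      exact Finset.sum_congr rfl fun s _ => mul_comm _ _
    · intro h i
      have hi : ∑ s, M i s * w s = iteratedDeriv k (f i) x := congrFun h i
      rw [← hi]
      exact Finset.sum_congr rfl fun s _ => mul_comm _ _
  refine ⟨M⁻¹.mulVec bb, ?_, ?_⟩
  · apply (key _).mpr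
    rw [Matrix.mulVec_mulVec, Matrix.mul_nonsing_inv M hMunit, Matrix.one_mulVec]
  · intro w hw
    have h2 : M⁻¹.mulVec (M.mulVec w) = M⁻¹.mulVec bb :=
      congrArg (fun v => M⁻¹.mulVec v) ((key w).mp hw)
    rw [Matrix.mulVec_mulVec, Matrix.nonsing_inv_mul M hMunit, Matrix.one_mulVec] at h2
    exact h2
end

section
/- Let a, b, c, d be real numbers and A the 2×4 matrix [[1, 0, a, b], [0, 1, c, d]]. Then all six maximal 2×2 minors Δ_{12}(A), Δ_{13}(A), Δ_{14}(A), Δ_{23}(A), Δ_{24}(A), Δ_{34}(A) are strictly positive if and only if there exist positive real numbers w_{13}, w_{23}, w_{14}, w_{24} such that a = −w_{13}, b = −w_{13}(w_{14} + w_{24}), c = w_{23}, d = w_{23} w_{24}; moreover, when they exist these positive weights are unique (namely w_{13} = −a, w_{23} = c, w_{24} = d/c, w_{14} = (bc − ad)/(ac)). -/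
/-- The `2 × 2` minor of a `2 × 4` real matrix `A` on the columns `i` and `j`. -/
def minor2 (A : Matrix (Fin 2) (Fin 4) ℝ) (i j : Fin 4) : ℝ :=
  A 0 i * A 1 j - A 0 j * A 1 i

/-- the matrix `A = [[1,0,a,b],[0,1,c,d]]` has all six maximal minors
strictly positive iff there are positive weights `w₁₃, w₂₃, w₁₄, w₂₄` with
`a = -w₁₃`, `b = -w₁₃(w₁₄+w₂₄)`, `c = w₂₃`, `d = w₂₃w₂₄`; moreover such weights are
unique: `w₁₃ = -a`, `w₂₃ = c`, `w₂₄ = d/c`, `w₁₄ = (bc-ad)/(ac)`. -/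
theorem grtp24_weight_parametrization
    (a b c d : ℝ)
    (A : Matrix (Fin 2) (Fin 4) ℝ)
    (hA : A = !![1, 0, a, b; 0, 1, c, d]) :
    ((0 < minor2 A 0 1 ∧ 0 < minor2 A 0 2 ∧ 0 < minor2 A 0 3 ∧
        0 < minor2 A 1 2 ∧ 0 < minor2 A 1 3 ∧ 0 < minor2 A 2 3) ↔
      (∃ w13 w23 w14 w24 : ℝ,
        0 < w13 ∧ 0 < w23 ∧ 0 < w14 ∧ 0 < w24 ∧
        a = -w13 ∧ b = -w13 * (w14 + w24) ∧ c = w23 ∧ d = w23 * w24)) ∧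
    (∀ w13 w23 w14 w24 : ℝ,
      0 < w13 → 0 < w23 → 0 < w14 → 0 < w24 →
      a = -w13 → b = -w13 * (w14 + w24) → c = w23 → d = w23 * w24 →
      w13 = -a ∧ w23 = c ∧ w24 = d / c ∧ w14 = (b * c - a * d) / (a * c)) := by
  subst hA
  have e1 : minor2 !![1, 0, a, b; 0, 1, c, d] 0 1 = 1 := by simp [minor2]
  have e2 : minor2 !![1, 0, a, b; 0, 1, c, d] 0 2 = c := by simp [minor2]
  have e3 : minor2 !![1, 0, a, b; 0, 1, c, d] 0 3 = d := by simp [minor2]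
  have e4 : minor2 !![1, 0, a, b; 0, 1, c, d] 1 2 = -a := by simp [minor2]
  have e5 : minor2 !![1, 0, a, b; 0, 1, c, d] 1 3 = -b := by simp [minor2]
  have e6 : minor2 !![1, 0, a, b; 0, 1, c, d] 2 3 = a * d - b * c := by
    simp [minor2]
  rw [e1, e2, e3, e4, e5, e6]
  constructor
  · constructor
    · rintro ⟨-, hc, hd, ha, hb, hm⟩
      have ha' : a < 0 := by linarith
      have ha0 : a ≠ 0 := ne_of_lt ha'
      have hc0 : c ≠ 0 := ne_of_gt hc
      refine ⟨-a, c, (b * c - a * d) / (a * c), d / c, by linarith, hc, ?_, div_pos hd hc,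
        by ring, ?_, rfl, by field_simp⟩
      · apply div_pos_iff.2
        right
        exact ⟨by nlinarith, by nlinarith⟩
      · field_simp
        ring
    · rintro ⟨w13, w23, w14, w24, h13, h23, h14, h24, ha, hb, hc, hd⟩
      subst ha hb hc hd
      exact ⟨by norm_num, h23, by positivity, by linarith, by nlinarith, by
        nlinarith [mul_pos (mul_pos h13 h23) h14]⟩
  · rintro w13 w23 w14 w24 h13 h23 h14 h24 ha hb hc hd
    subst ha hb hc hd
    refine ⟨by ring, rfl, ?_, ?_⟩
    · rw [eq_div_iff (by positivity)]; ring
    · rw [eq_div_iff (by nlinarith)]; ring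
end

section
/- Let w_{14}, w_{23}, w_{24} > 0 and A, B ∈ ℝ satisfy (w_{14} + w_{24})A + w_{14}w_{23}B ≠ 0 and A + w_{23}B ≠ 0. For real ξ define ζ̃_2(ξ) = −ξ³(ξ − 1)[(w_{14} + w_{24})A + w_{14}w_{23}B] / ( w_{23}(ξ − 1)[w_{14}(ξ³ + ξ + 1) + w_{24}(1 − ξ²)]B + ξ²[(ξ² − 1)w_{14} + (1 − ξ)w_{24}]A ), and ζ_2(ξ) = (ξ²/ζ̃_2(ξ) + 1)/(1 − ξ²) (defined for all sufficiently large ξ, for which the denominators are nonzero). Then lim_{ξ→∞} ζ_2(ξ) = w_{14}(A + w_{23}B) / ( (w_{14} + w_{24})A + w_{23}w_{14}B ). -/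
set_option maxHeartbeats 1600000


open Filter

/-- the divisor coordinate `ζ₂(ξ)`, obtained applying the coordinate
change `ζ = (ξ²/ζ̃ + 1)/(1-ξ²)` to
`ζ̃₂(ξ) = -ξ³(ξ-1)[(w₁₄+w₂₄)A + w₁₄w₂₃B] /
( w₂₃(ξ-1)[w₁₄(ξ³+ξ+1)+w₂₄(1-ξ²)]B + ξ²[(ξ²-1)w₁₄+(1-ξ)w₂₄]A )`,
tends to `w₁₄(A + w₂₃B)/((w₁₄+w₂₄)A + w₂₃w₁₄B)` as `ξ → ∞`. -/
theorem divisor_point_limit_on_gamma13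
    (w14 w23 w24 A B : ℝ)
    (h14 : 0 < w14) (h23 : 0 < w23) (h24 : 0 < w24)
    (hN : (w14 + w24) * A + w14 * w23 * B ≠ 0)
    (hD : A + w23 * B ≠ 0) :
    Tendsto (fun ξ : ℝ =>
        (ξ ^ 2 /
            (-(ξ ^ 3 * (ξ - 1) * ((w14 + w24) * A + w14 * w23 * B)) /
              (w23 * (ξ - 1) * (w14 * (ξ ^ 3 + ξ + 1) + w24 * (1 - ξ ^ 2)) * B +
                ξ ^ 2 * ((ξ ^ 2 - 1) * w14 + (1 - ξ) * w24) * A)) + 1) /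
          (1 - ξ ^ 2))
      atTop
      (nhds (w14 * (A + w23 * B) / ((w14 + w24) * A + w23 * w14 * B))) := by
  set N : ℝ := (w14 + w24) * A + w14 * w23 * B with hNdef
  -- rational function in u = 1/ξ
  set g : ℝ → ℝ := fun u =>
      (A * (-w14 + w24 * u + 2 * w14 * u ^ 2 - (w14 + w24) * u ^ 3) +
        w23 * B * (-w14 + (w14 + w24) * u - w24 * u ^ 2 - (w14 + w24) * u ^ 3 +
          (w14 + w24) * u ^ 4)) /
      (-N * (1 - u - u ^ 2 + u ^ 3)) with hg
  have hg0 : g 0 = w14 * (A + w23 * B) / ((w14 + w24) * A + w23 * w14 * B) := by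
    have hN' : (w14 + w24) * A + w23 * w14 * B ≠ 0 := by
      rw [hNdef] at hN; intro h; apply hN; rw [← h]; ring
    simp only [hg, hNdef]
    rw [div_eq_div_iff (by intro h; apply hN; rw [hNdef]; linarith [h]; ) hN']
    · ring
  have hcont : ContinuousAt g 0 := by
    apply ContinuousAt.div
    · fun_prop
    · fun_prop
    · simp only [hNdef]
      intro h
      apply hN
      rw [hNdef]
      nlinarith [h]
  have htend : Tendsto (fun ξ : ℝ => g ξ⁻¹) atTop
      (nhds (w14 * (A + w23 * B) / ((w14 + w24) * A + w23 * w14 * B))) := by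
    rw [← hg0]
    exact hcont.tendsto.comp tendsto_inv_atTop_zero
  refine htend.congr' ?_
  filter_upwards [eventually_gt_atTop (1 : ℝ)] with ξ hξ
  have hξ0 : ξ ≠ 0 := by linarith
  have hξ4 : ξ ^ 4 ≠ 0 := pow_ne_zero 4 hξ0
  have hξ1 : ξ - 1 ≠ 0 := by intro h; linarith [sub_eq_zero.mp h]
  have hξ1' : (1 : ℝ) - ξ ^ 2 ≠ 0 := by nlinarith
  set P : ℝ := A * (-w14 * ξ ^ 4 + w24 * ξ ^ 3 + 2 * w14 * ξ ^ 2 - (w14 + w24) * ξ) +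
      w23 * B * (-w14 * ξ ^ 4 + (w14 + w24) * ξ ^ 3 - w24 * ξ ^ 2 - (w14 + w24) * ξ +
        (w14 + w24)) with hP
  set Q : ℝ := ξ * (ξ - 1) * N * (1 - ξ ^ 2) with hQ
  have hden : ξ * (ξ - 1) * N ≠ 0 := mul_ne_zero (mul_ne_zero hξ0 hξ1) hN
  have hnum : -(ξ ^ 3 * (ξ - 1) * N) ≠ 0 := by
    apply neg_ne_zero.mpr
    exact mul_ne_zero (mul_ne_zero (pow_ne_zero 3 hξ0) hξ1) hN
  have enum : A * (-w14 + w24 * ξ⁻¹ + 2 * w14 * ξ⁻¹ ^ 2 - (w14 + w24) * ξ⁻¹ ^ 3) +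
      w23 * B * (-w14 + (w14 + w24) * ξ⁻¹ - w24 * ξ⁻¹ ^ 2 - (w14 + w24) * ξ⁻¹ ^ 3 +
        (w14 + w24) * ξ⁻¹ ^ 4) = P / ξ ^ 4 := by
    rw [hP, eq_div_iff hξ4]
    field_simp
  have eden : -N * (1 - ξ⁻¹ - ξ⁻¹ ^ 2 + ξ⁻¹ ^ 3) = Q / ξ ^ 4 := by
    rw [hQ, eq_div_iff hξ4]
    field_simp
    ring
  have hgval : g ξ⁻¹ = P / Q := by
    rw [hg]
    simp only []
    rw [enum, eden, div_div_div_cancel_right₀ hξ4]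
  rw [hgval, div_div_eq_mul_div]
  have e3 : ξ ^ 2 * (w23 * (ξ - 1) * (w14 * (ξ ^ 3 + ξ + 1) + w24 * (1 - ξ ^ 2)) * B +
        ξ ^ 2 * ((ξ ^ 2 - 1) * w14 + (1 - ξ) * w24) * A) /
      (-(ξ ^ 3 * (ξ - 1) * N)) + 1 = P / (ξ * (ξ - 1) * N) := by
    rw [hP]
    field_simp
    rw [hNdef]
    ring
  rw [e3, div_div, hQ]
end
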